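/- For every finite pseudo-metric space (M, ρ), the weight of its minimal filling satisfies mf(M, ρ) = inf { mst(N, d) : (N, d) is a finite pseudo-metric space admitting a distance-preserving map f : M → N }, i.e. the infimum of the lengths of minimal spanning trees over all finite extensions of (M, ρ). -/

import Mathlib

open SimpleGraph Finset

structure IsPseudoMetric {M : Type} (ρ : M → M → ℝ) : Prop where
  nonneg : ∀ p q, 0 ≤ ρ p q
  refl : ∀ p, ρ p p = 0
  symm : ∀ p q, ρ p q = ρ q p
  triangle : ∀ p q r, ρ p r ≤ ρ p q + ρ q r

/-- A tree joining a finite set `M`: a finite tree `G = (V, E)` with an injection `ι : M → V`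
such that every vertex of degree 1 or 2 lies in the image of `M`. -/
structure Frame (M : Type) where
  V : Type
  [fin : Fintype V]
  [deq : DecidableEq V]
  G : SimpleGraph V
  [dec : DecidableRel G.Adj]
  tree : G.IsTree
  ι : M → V
  inj : Function.Injective ι
  joins : ∀ v : V, G.degree v = 1 ∨ G.degree v = 2 → v ∈ Set.range ι

attribute [instance] Frame.fin Frame.deq Frame.dec

namespace Frame

variable {M : Type}

/-- The unique path between two vertices of the tree. -/
noncomputable def path (F : Frame M) (u v : F.V) : F.G.Walk u v :=
  (F.tree.existsUnique_path u v).exists.choose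

/-- `d_ω(u,v)`: the sum of the weights of the edges of the unique path from `u` to `v`. -/
noncomputable def dist (F : Frame M) (w : Sym2 F.V → ℝ) (u v : F.V) : ℝ :=
  ((F.path u v).edges.map w).sum

/-- `ω(G)`: the total weight of all edges of the tree. -/
noncomputable def weight (F : Frame M) (w : Sym2 F.V → ℝ) : ℝ :=
  ∑ e ∈ F.G.edgeFinset, w e

/-- `(G, ω)` is a filling of `(M, ρ)`: nonnegative weights and `ρ p q ≤ d_ω(ι p, ι q)`. -/
def IsFilling (F : Frame M) (w : Sym2 F.V → ℝ) (ρ : M → M → ℝ) : Prop :=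
  (∀ e ∈ F.G.edgeFinset, 0 ≤ w e) ∧
  ∀ p q : M, ρ p q ≤ F.dist w (F.ι p) (F.ι q)

end Frame

/-- `mf(M,ρ)`: the infimum of weights of fillings of `(M, ρ)`. -/
noncomputable def mf {M : Type} (ρ : M → M → ℝ) : ℝ :=
  sInf { x | ∃ F : Frame M, ∃ w : Sym2 F.V → ℝ, F.IsFilling w ρ ∧ F.weight w = x }

/-- A minimal filling: a filling whose weight equals `mf(M,ρ)`. -/
def IsMinFilling {M : Type} (F : Frame M) (w : Sym2 F.V → ℝ) (ρ : M → M → ℝ) : Prop :=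
  F.IsFilling w ρ ∧ F.weight w = mf ρ

/- `mst(N,d)`: the length of a minimal spanning tree of a finite pseudo-metric space `(N, d)`:
the minimum over all spanning trees of the complete graph on `N` of the sum of the
lengths of their edges (each edge counted once, via the symmetrized double sum). -/
open Classical in
noncomputable def mstW {N : Type} [Fintype N] (d : N → N → ℝ) : ℝ :=
  sInf { x | ∃ H : SimpleGraph N, H.IsTree ∧
    x = (∑ u : N, ∑ v : N, if H.Adj u v then d u v else 0) / 2 }


section Aux1

lemma list_sum_le {α : Type*} [DecidableEq α] (w : α → ℝ) :
    ∀ (l2 l1 : List α), l1.Nodup → l1 ⊆ l2 → (∀ e ∈ l2, 0 ≤ w e) →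
      (l1.map w).sum ≤ (l2.map w).sum := by
  intro l2
  induction l2 with
  | nil => intro l1 _ hsub _; simp [List.subset_nil.mp hsub]
  | cons a t ih =>
    intro l1 hnd hsub hnn
    by_cases ha : a ∈ l1
    · have hperm : List.Perm l1 (a :: l1.erase a) := List.perm_cons_erase ha
      have hsum : (l1.map w).sum = w a + ((l1.erase a).map w).sum := by
        rw [List.Perm.sum_eq (hperm.map w)]; simp
      rw [hsum]
      simp only [List.map_cons, List.sum_cons]
      gcongr
      · exact ih (l1.erase a) (hnd.erase a)
          (fun x hx => by
            have hxa : x ≠ a := (List.Nodup.mem_erase_iff hnd).mp hx |>.1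
            have : x ∈ a :: t := hsub (List.mem_of_mem_erase hx)
            rcases this with _ | h
            · exact absurd rfl hxa
            · assumption)
          (fun e he => hnn e (List.mem_cons_of_mem _ he))
    · have hsub' : l1 ⊆ t := fun x hx => by
        rcases hsub hx with _ | h
        · exact absurd hx ha
        · assumption
      have := ih l1 hnd hsub' (fun e he => hnn e (List.mem_cons_of_mem _ he))
      simp only [List.map_cons, List.sum_cons]
      have h0 : 0 ≤ w a := hnn a (List.mem_cons_self)
      linarith

lemma walk_weight_le {V N : Type} {G : SimpleGraph V} (w : Sym2 V → ℝ) (π : V → N)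
    {d : N → N → ℝ} (hd : IsPseudoMetric d)
    (hc : ∀ u v, G.Adj u v → d (π u) (π v) ≤ w s(u, v)) :
    ∀ {u v : V} (p : G.Walk u v), d (π u) (π v) ≤ (p.edges.map w).sum := by
  intro u v p
  induction p with
  | nil => simp [hd.refl]
  | @cons a b c h q ih =>
    simp only [Walk.edges_cons, List.map_cons, List.sum_cons]
    calc d (π a) (π c) ≤ d (π a) (π b) + d (π b) (π c) := hd.triangle _ _ _
    _ ≤ w s(a, b) + (q.edges.map w).sum := by gcongr; exact hc _ _ h

lemma conn_card_le {V : Type} [Fintype V] [DecidableEq V] (G : SimpleGraph V)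
    [DecidableRel G.Adj] (hc : G.Connected) : Fintype.card V ≤ G.edgeFinset.card + 1 := by
  have hne : Nonempty V := hc.nonempty
  obtain ⟨r⟩ := hne
  have key : ∀ v : V, v ≠ r → ∃ u, G.Adj v u ∧ G.dist u r < G.dist v r := by
    intro v hv
    obtain ⟨p, hp⟩ := (hc.preconnected v r).exists_walk_length_eq_dist
    cases p with
    | nil => exact absurd rfl hv
    | @cons _ u _ h q =>
      refine ⟨u, h, ?_⟩
      have h1 : G.dist u r ≤ q.length := SimpleGraph.dist_le q
      have h2 : q.length + 1 = G.dist v r := by simpa using hp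
      omega
  choose nb hadj hlt using key
  classical
  set F : V → Sym2 V := fun v => if h : v = r then s(r, r) else s(v, nb v h) with hF
  have hinj : Set.InjOn F ↑(Finset.univ.erase r) := by
    intro x hx y hy hxy
    simp only [Finset.coe_erase, Set.mem_diff, Set.mem_singleton_iff] at hx hy
    have hxr : x ≠ r := hx.2
    have hyr : y ≠ r := hy.2
    simp only [hF, dif_neg hxr, dif_neg hyr, Sym2.eq_iff] at hxy
    rcases hxy with ⟨h1, _⟩ | ⟨h1, h2⟩
    · exact h1
    · exfalso
      have hx' := hlt x hxr
      have hy' := hlt y hyr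
      rw [h2] at hx'
      rw [← h1] at hy'
      omega
  have hmaps : ∀ x ∈ Finset.univ.erase r, F x ∈ G.edgeFinset := by
    intro x hx
    have hxr : x ≠ r := Finset.ne_of_mem_erase hx
    simp only [hF, dif_neg hxr, SimpleGraph.mem_edgeFinset, SimpleGraph.mem_edgeSet]
    exact hadj x hxr
  have hcard := Finset.card_le_card_of_injOn F hmaps hinj
  rw [Finset.card_erase_of_mem (Finset.mem_univ r), Finset.card_univ] at hcard
  omega

lemma isTree_of_card {V : Type} [Fintype V] [DecidableEq V] (G : SimpleGraph V)
    [DecidableRel G.Adj] (hc : G.Connected) (hcard : G.edgeFinset.card + 1 ≤ Fintype.card V) :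
    G.IsTree := by
  refine ⟨hc, ?_⟩
  by_contra hac
  rw [SimpleGraph.isAcyclic_iff_forall_edge_isBridge] at hac
  push_neg at hac
  obtain ⟨e, he, hbr⟩ := hac
  revert he hbr
  induction e using Sym2.inductionOn with
  | _ x y =>
    intro he hbr
    have hadj : G.Adj x y := (SimpleGraph.mem_edgeSet G).mp he
    rw [SimpleGraph.isBridge_iff] at hbr
    push_neg at hbr
    have hreach : (G \ SimpleGraph.fromEdgeSet {s(x, y)}).Reachable x y := hbr
    set G' : SimpleGraph V := G.deleteEdges {s(x, y)} with hG'
    have hreach' : G'.Reachable x y := hreach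
    letI : DecidableRel G'.Adj := fun a b => by
      rw [hG']; simp only [SimpleGraph.deleteEdges_adj]; infer_instance
    -- G' is connected
    have hmono : ∀ a b : V, G.Reachable a b → G'.Reachable a b := by
      intro a b hab
      obtain ⟨p⟩ := hab
      induction p with
      | nil => exact SimpleGraph.Reachable.refl _
      | @cons c m _ h q ih =>
        by_cases hcm : s(c, m) = s(x, y)
        · rcases Sym2.eq_iff.mp hcm with ⟨rfl, rfl⟩ | ⟨rfl, rfl⟩
          · exact hreach'.trans ih
          · exact hreach'.symm.trans ih
        · refine (SimpleGraph.Adj.reachable ?_).trans ih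
          rw [hG', SimpleGraph.deleteEdges_adj]
          exact ⟨h, by simpa using hcm⟩
    have hc' : G'.Connected := by
      haveI : Nonempty V := hc.nonempty
      exact SimpleGraph.Connected.mk fun a b => hmono a b (hc.preconnected a b)
    -- edge count of G'
    have hsub : G'.edgeFinset ⊂ G.edgeFinset := by
      refine Finset.ssubset_iff_of_subset ?_ |>.mpr ?_
      · intro e' he'
        rw [SimpleGraph.mem_edgeFinset] at he' ⊢
        exact (SimpleGraph.edgeSet_deleteEdges _ ▸ he' : e' ∈ G.edgeSet \ _).1
      · refine ⟨s(x, y), ?_, ?_⟩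
        · rwa [SimpleGraph.mem_edgeFinset]
        · rw [SimpleGraph.mem_edgeFinset, SimpleGraph.edgeSet_deleteEdges]
          simp
    have := conn_card_le G' hc'
    have := Finset.card_lt_card hsub
    omega

lemma exists_tree (N : Type) [Fintype N] [DecidableEq N] [Nonempty N] :
    ∃ H : SimpleGraph N, H.IsTree := by
  classical
  obtain ⟨a⟩ := ‹Nonempty N›
  set H : SimpleGraph N := ⟨fun x y => x ≠ y ∧ (x = a ∨ y = a), ⟨by
      intro x y h; exact ⟨h.1.symm, h.2.symm⟩⟩, ⟨by intro x h; exact h.1 rfl⟩⟩ with hH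
  letI : DecidableRel H.Adj := fun x y => by rw [hH]; infer_instance
  have hAdj : ∀ x y : N, x ≠ y → (x = a ∨ y = a) → H.Adj x y :=
    fun x y h1 h2 => (⟨h1, h2⟩ : x ≠ y ∧ (x = a ∨ y = a))
  have hconn : H.Connected := by
    refine SimpleGraph.Connected.mk fun x y => ?_
    by_cases hxy : x = y
    · exact hxy ▸ SimpleGraph.Reachable.refl x
    · by_cases hx : x = a
      · exact SimpleGraph.Adj.reachable (hAdj _ _ hxy (Or.inl hx))
      · by_cases hy : y = a
        · exact SimpleGraph.Adj.reachable (hAdj _ _ hxy (Or.inr hy))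
        · exact (SimpleGraph.Adj.reachable (hAdj _ _ hx (Or.inr rfl))).trans
            (SimpleGraph.Adj.reachable (hAdj _ _ (Ne.symm hy) (Or.inl rfl)))
  refine ⟨H, isTree_of_card H hconn ?_⟩
  have himg : H.edgeFinset ⊆ (Finset.univ.erase a).image (fun x => s(a, x)) := by
    intro e he
    rw [SimpleGraph.mem_edgeFinset] at he
    induction e using Sym2.inductionOn with
    | _ x y =>
      rw [SimpleGraph.mem_edgeSet] at he
      obtain ⟨hne, hx | hy⟩ := he
      · subst hx
        exact Finset.mem_image.mpr ⟨y, Finset.mem_erase.mpr ⟨Ne.symm hne, Finset.mem_univ _⟩, rfl⟩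
      · subst hy
        refine Finset.mem_image.mpr ⟨x, Finset.mem_erase.mpr ⟨hne, Finset.mem_univ _⟩, ?_⟩
        rw [Sym2.eq_swap]
  have h1 := Finset.card_le_card himg
  have h2 := Finset.card_image_le (s := Finset.univ.erase a) (f := fun x => s(a, x))
  rw [Finset.card_erase_of_mem (Finset.mem_univ a), Finset.card_univ] at h2
  have h3 : 1 ≤ Fintype.card N := Fintype.card_pos
  omega

lemma ite_inst {α : Sort*} (p : Prop) (i1 i2 : Decidable p) (a b : α) :
    @ite _ p i1 a b = @ite _ p i2 a b := by
  cases Subsingleton.elim i1 i2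
  rfl

lemma doubleSum_eq {V : Type} [Fintype V] [DecidableEq V] (G : SimpleGraph V)
    [DecidableRel G.Adj] (g : Sym2 V → ℝ) :
    (∑ u : V, ∑ v : V, if G.Adj u v then g s(u, v) else 0) = 2 * ∑ e ∈ G.edgeFinset, g e := by
  classical
  have h1 : (∑ u : V, ∑ v : V, if G.Adj u v then g s(u, v) else 0)
      = ∑ z ∈ (Finset.univ ×ˢ Finset.univ : Finset (V × V)).filter (fun z => G.Adj z.1 z.2),
          g s(z.1, z.2) := by
    rw [Finset.sum_filter, ← Finset.sum_product']
  rw [h1]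
  rw [← Finset.sum_fiberwise_of_maps_to (g := fun z : V × V => s(z.1, z.2))
    (t := G.edgeFinset) (fun z hz => by
      simp only [Finset.mem_filter] at hz
      exact SimpleGraph.mem_edgeFinset.mpr ((SimpleGraph.mem_edgeSet G).mpr hz.2))]
  rw [Finset.mul_sum]
  refine Finset.sum_congr rfl ?_
  intro e he
  revert he
  induction e using Sym2.inductionOn with
  | _ a b =>
    intro he
    have hadj : G.Adj a b := (SimpleGraph.mem_edgeSet G).mp (SimpleGraph.mem_edgeFinset.mp he)
    have hne : a ≠ b := G.ne_of_adj hadj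
    have hfib : ((Finset.univ ×ˢ Finset.univ : Finset (V × V)).filter
        (fun z => G.Adj z.1 z.2)).filter (fun z => s(z.1, z.2) = s(a, b))
        = {(a, b), (b, a)} := by
      ext z
      simp only [Finset.mem_filter, Finset.mem_product, Finset.mem_univ, true_and,
        Finset.mem_insert, Finset.mem_singleton, Sym2.eq_iff]
      constructor
      · rintro ⟨_, (⟨h1, h2⟩ | ⟨h1, h2⟩)⟩
        · left; exact Prod.ext h1 h2
        · right; exact Prod.ext h1 h2
      · rintro (rfl | rfl)
        · exact ⟨hadj, Or.inl ⟨rfl, rfl⟩⟩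
        · exact ⟨hadj.symm, Or.inr ⟨rfl, rfl⟩⟩
    rw [hfib]
    have hne' : ((a, b) : V × V) ≠ (b, a) := by
      intro h
      exact hne (congrArg Prod.fst h)
    rw [Finset.sum_pair hne']
    have : s(b, a) = s(a, b) := Sym2.eq_swap
    rw [this]
    ring


namespace Frame

variable {M : Type} (F : Frame M)

lemma path_isPath (u v : F.V) : (F.path u v).IsPath :=
  (F.tree.existsUnique_path u v).exists.choose_spec

lemma path_unique {u v : F.V} (q : F.G.Walk u v) (hq : q.IsPath) : q = F.path u v := by
  obtain ⟨w₀, hw₀, hu⟩ := F.tree.existsUnique_path u v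
  rw [hu q hq, hu _ (F.path_isPath u v)]

variable (w : Sym2 F.V → ℝ) (hw : ∀ e ∈ F.G.edgeFinset, 0 ≤ w e)

include hw

lemma dist_le_walk {u v : F.V} (p : F.G.Walk u v) :
    F.dist w u v ≤ (p.edges.map w).sum := by
  have hbp : p.bypass = F.path u v := F.path_unique p.bypass p.bypass_isPath
  rw [Frame.dist, ← hbp]
  exact list_sum_le w p.edges p.bypass.edges p.bypass_isPath.isTrail.edges_nodup
    p.edges_bypass_subset
    (fun e he => hw e (SimpleGraph.mem_edgeFinset.mpr (p.edges_subset_edgeSet he)))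

lemma dist_nonneg' (u v : F.V) : 0 ≤ F.dist w u v := by
  rw [Frame.dist]
  apply List.sum_nonneg
  intro x hx
  obtain ⟨e, he, rfl⟩ := List.mem_map.mp hx
  exact hw e (SimpleGraph.mem_edgeFinset.mpr ((F.path u v).edges_subset_edgeSet he))

lemma dist_self' (u : F.V) : F.dist w u u = 0 := by
  have h : (SimpleGraph.Walk.nil : F.G.Walk u u) = F.path u u :=
    F.path_unique _ SimpleGraph.Walk.IsPath.nil
  rw [Frame.dist, ← h]
  simp

lemma dist_symm' (u v : F.V) : F.dist w u v = F.dist w v u := by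
  have h : (F.path u v).reverse = F.path v u :=
    F.path_unique _ (F.path_isPath u v).reverse
  rw [Frame.dist, Frame.dist, ← h, SimpleGraph.Walk.edges_reverse, List.map_reverse,
    List.sum_reverse]

lemma dist_triangle' (u x v : F.V) : F.dist w u v ≤ F.dist w u x + F.dist w x v := by
  have := F.dist_le_walk w hw ((F.path u x).append (F.path x v))
  rwa [SimpleGraph.Walk.edges_append, List.map_append, List.sum_append] at this

lemma dist_adj_le {u v : F.V} (h : F.G.Adj u v) : F.dist w u v ≤ w s(u, v) := by
  have := F.dist_le_walk w hw (SimpleGraph.Walk.cons h SimpleGraph.Walk.nil)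
  simpa using this

end Frame

lemma treeVal_nonneg {N : Type} [Fintype N] (d : N → N → ℝ) (hd : ∀ u v, 0 ≤ d u v)
    (H : SimpleGraph N) [i : DecidableRel H.Adj] :
    0 ≤ (∑ u : N, ∑ v : N, if H.Adj u v then d u v else 0) / 2 := by
  apply div_nonneg _ (by norm_num)
  apply Finset.sum_nonneg; intro u _
  apply Finset.sum_nonneg; intro v _
  split
  exacts [hd u v, le_rfl]

open Classical in
lemma mstW_bddBelow {N : Type} [Fintype N] (d : N → N → ℝ) (hd : ∀ u v, 0 ≤ d u v) :
    ∀ x ∈ { x | ∃ H : SimpleGraph N, H.IsTree ∧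
      x = (∑ u : N, ∑ v : N, if H.Adj u v then d u v else 0) / 2 }, 0 ≤ x := by
  rintro x ⟨H, _, rfl⟩
  exact treeVal_nonneg d hd H

lemma mstW_nonneg {N : Type} [Fintype N] (d : N → N → ℝ) (hd : ∀ u v, 0 ≤ d u v) :
    0 ≤ mstW d :=
  Real.sInf_nonneg (mstW_bddBelow d hd)

open Classical in
lemma mstW_le_tree {N : Type} [Fintype N] (d : N → N → ℝ) (hd : ∀ u v, 0 ≤ d u v)
    (H : SimpleGraph N) (hH : H.IsTree) [i : DecidableRel H.Adj] :
    mstW d ≤ (∑ u : N, ∑ v : N, if H.Adj u v then d u v else 0) / 2 := by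
  apply csInf_le
  · exact ⟨0, mstW_bddBelow d hd⟩
  · refine ⟨H, hH, ?_⟩
    congr!

lemma extension_of_filling {M : Type} [Fintype M] (ρ : M → M → ℝ) (hρ : IsPseudoMetric ρ)
    (F : Frame M) (w : Sym2 F.V → ℝ) (hF : F.IsFilling w ρ) :
    ∃ (N : Type) (iN : Fintype N) (d : N → N → ℝ) (f : M → N),
      IsPseudoMetric d ∧ (∀ p q : M, d (f p) (f q) = ρ p q) ∧ @mstW N iN d ≤ F.weight w := by
  classical
  obtain ⟨hw, hfill⟩ := hF
  set D := F.dist w with hD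
  have hD0 : ∀ u v, 0 ≤ D u v := F.dist_nonneg' w hw
  have hDs : ∀ u, D u u = 0 := F.dist_self' w hw
  have hDsym : ∀ u v, D u v = D v u := F.dist_symm' w hw
  have hDtri : ∀ u x v, D u v ≤ D u x + D x v := fun u x v => F.dist_triangle' w hw u x v
  set cand : F.V → F.V → Option (M × M) → ℝ := fun u v o =>
    Option.rec (D u v) (fun st => D u (F.ι st.1) + ρ st.1 st.2 + D (F.ι st.2) v) o with hcand
  set d : F.V → F.V → ℝ := fun u v =>
    (Finset.univ : Finset (Option (M × M))).inf' ⟨none, Finset.mem_univ _⟩ (cand u v) with hd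
  have hcand_none : ∀ u v, cand u v none = D u v := fun _ _ => rfl
  have hcand_some : ∀ u v s t, cand u v (some (s, t)) = D u (F.ι s) + ρ s t + D (F.ι t) v :=
    fun _ _ _ _ => rfl
  have hcand_nonneg : ∀ u v o, 0 ≤ cand u v o := by
    rintro u v (_ | ⟨s, t⟩)
    · exact hD0 u v
    · have h1 := hD0 u (F.ι s)
      have h2 := hD0 (F.ι t) v
      have h3 := hρ.nonneg s t
      rw [hcand_some]
      linarith
  have hd_le : ∀ u v o, d u v ≤ cand u v o := fun u v o => Finset.inf'_le _ (Finset.mem_univ o)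
  have hd_ge : ∀ u v (x : ℝ), (∀ o, x ≤ cand u v o) → x ≤ d u v := fun u v x h =>
    Finset.le_inf' _ _ (fun o _ => h o)
  have hd_ex : ∀ u v, ∃ o, d u v = cand u v o := by
    intro u v
    obtain ⟨o, _, ho⟩ := Finset.exists_mem_eq_inf'
      (⟨none, Finset.mem_univ _⟩ : (Finset.univ : Finset (Option (M × M))).Nonempty) (cand u v)
    exact ⟨o, ho⟩
  have hd0 : ∀ u v, 0 ≤ d u v := fun u v => hd_ge u v 0 (hcand_nonneg u v)
  have hdrefl : ∀ u, d u u = 0 := by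
    intro u
    refine le_antisymm ?_ (hd0 u u)
    have := hd_le u u none
    rwa [hcand_none, hDs] at this
  have hdsymm_le : ∀ u v, d u v ≤ d v u := by
    intro u v
    obtain ⟨o, ho⟩ := hd_ex v u
    rcases o with _ | ⟨s, t⟩
    · rw [ho, hcand_none]
      have h := hd_le u v none
      rw [hcand_none] at h
      rw [hDsym v u]
      exact h
    · rw [ho, hcand_some]
      have := hd_le u v (some (t, s))
      rw [hcand_some] at this
      rw [hρ.symm t s, hDsym u (F.ι t), hDsym (F.ι s) v] at this
      linarith
  have hdsymm : ∀ u v, d u v = d v u := fun u v => le_antisymm (hdsymm_le u v) (hdsymm_le v u)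
  have hdtri : ∀ u x v, d u v ≤ d u x + d x v := by
    intro u x v
    obtain ⟨o₁, ho₁⟩ := hd_ex u x
    obtain ⟨o₂, ho₂⟩ := hd_ex x v
    rcases o₁ with _ | ⟨s, t⟩ <;> rcases o₂ with _ | ⟨s', t'⟩
    · rw [ho₁, ho₂, hcand_none, hcand_none]
      exact (hd_le u v none).trans ((hcand_none u v) ▸ hDtri u x v)
    · rw [ho₁, ho₂, hcand_none, hcand_some]
      have h := hd_le u v (some (s', t'))
      rw [hcand_some] at h
      have := hDtri u x (F.ι s')
      linarith
    · rw [ho₁, ho₂, hcand_some, hcand_none]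
      have h := hd_le u v (some (s, t))
      rw [hcand_some] at h
      have := hDtri (F.ι t) x v
      linarith
    · rw [ho₁, ho₂, hcand_some, hcand_some]
      have h := hd_le u v (some (s, t'))
      rw [hcand_some] at h
      have h1 : ρ s t' ≤ ρ s t + ρ t s' + ρ s' t' := by
        have := hρ.triangle s t t'
        have := hρ.triangle t s' t'
        linarith
      have h2 : ρ t s' ≤ D (F.ι t) (F.ι s') := hfill t s'
      have h3 : D (F.ι t) (F.ι s') ≤ D (F.ι t) x + D x (F.ι s') := hDtri _ x _
      have h4 : D x (F.ι s') = D (F.ι s') x := hDsym _ _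
      linarith
  have hdext : ∀ p q : M, d (F.ι p) (F.ι q) = ρ p q := by
    intro p q
    refine le_antisymm ?_ ?_
    · have := hd_le (F.ι p) (F.ι q) (some (p, q))
      rw [hcand_some, hDs, hDsym, hDs] at this
      linarith
    · refine hd_ge _ _ _ ?_
      rintro (_ | ⟨s, t⟩)
      · rw [hcand_none]; exact hfill p q
      · rw [hcand_some]
        have h1 := hρ.triangle p s q
        have h2 := hρ.triangle s t q
        have h3 : ρ p s ≤ D (F.ι p) (F.ι s) := hfill p s
        have h4 : ρ t q ≤ D (F.ι t) (F.ι q) := hfill t q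
        linarith
  refine ⟨F.V, inferInstance, d, F.ι, ⟨hd0, hdrefl, hdsymm, hdtri⟩, hdext, ?_⟩
  have hmst := mstW_le_tree d hd0 F.G F.tree
  have hsum : (∑ u : F.V, ∑ v : F.V, if F.G.Adj u v then d u v else 0)
      ≤ (∑ u : F.V, ∑ v : F.V, if F.G.Adj u v then w s(u, v) else 0) := by
    apply Finset.sum_le_sum; intro u _
    apply Finset.sum_le_sum; intro v _
    split
    · next h =>
      have h1 := hd_le u v none
      rw [hcand_none] at h1
      exact h1.trans (F.dist_adj_le w hw h)
    · exact le_refl _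
  have h2 := doubleSum_eq F.G w
  rw [Frame.weight]
  linarith


section Ext

variable {M N : Type} (f : M → N) (H : SimpleGraph N) (S : Finset M)

/-- adjacency for the frame built from a tree on an extension -/
def extAdj : (N ⊕ {p : M // p ∈ S}) → (N ⊕ {p : M // p ∈ S}) → Prop
  | Sum.inl a, Sum.inl b => H.Adj a b
  | Sum.inl a, Sum.inr p => f p.val = a
  | Sum.inr p, Sum.inl a => f p.val = a
  | Sum.inr _, Sum.inr _ => False

def extGraph : SimpleGraph (N ⊕ {p : M // p ∈ S}) where
  Adj := extAdj f H S
  symm := ⟨by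
    rintro (a | p) (b | q) h
    · exact (h.symm : H.Adj b a)
    · exact h
    · exact h
    · exact h.elim⟩
  loopless := ⟨by
    rintro (a | p) h
    · exact H.loopless.irrefl a h
    · exact h.elim⟩

@[simp] lemma extGraph_adj_inl_inl {a b : N} :
    (extGraph f H S).Adj (Sum.inl a) (Sum.inl b) ↔ H.Adj a b := Iff.rfl
@[simp] lemma extGraph_adj_inl_inr {a : N} {p : {p : M // p ∈ S}} :
    (extGraph f H S).Adj (Sum.inl a) (Sum.inr p) ↔ f p.val = a := Iff.rfl
@[simp] lemma extGraph_adj_inr_inl {a : N} {p : {p : M // p ∈ S}} :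
    (extGraph f H S).Adj (Sum.inr p) (Sum.inl a) ↔ f p.val = a := Iff.rfl
@[simp] lemma extGraph_adj_inr_inr {p q : {p : M // p ∈ S}} :
    (extGraph f H S).Adj (Sum.inr p) (Sum.inr q) ↔ False := Iff.rfl

variable (d : N → N → ℝ)

/-- edge weights for the frame -/
def extW (hsymm : ∀ a b, d a b = d b a) : Sym2 (N ⊕ {p : M // p ∈ S}) → ℝ :=
  Sym2.lift ⟨fun x y =>
    match x, y with
    | Sum.inl a, Sum.inl b => d a b
    | _, _ => 0, by
      rintro (a | p) (b | q)
      · exact hsymm a b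
      · rfl
      · rfl
      · rfl⟩

@[simp] lemma extW_inl_inl (hsymm : ∀ a b, d a b = d b a) (a b : N) :
    extW S d hsymm s(Sum.inl a, Sum.inl b) = d a b := by
  rw [extW, Sym2.lift_mk]

@[simp] lemma extW_inl_inr (hsymm : ∀ a b, d a b = d b a) (a : N) (p : {p : M // p ∈ S}) :
    extW S d hsymm s(Sum.inl a, Sum.inr p) = 0 := by
  rw [extW, Sym2.lift_mk]

/-- classifying map for edges -/
def extPhi : Sym2 (N ⊕ {p : M // p ∈ S}) → Sym2 N ⊕ M :=
  Sym2.lift ⟨fun x y =>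
    match x, y with
    | Sum.inl a, Sum.inl b => Sum.inl s(a, b)
    | Sum.inl _, Sum.inr p => Sum.inr p.val
    | Sum.inr p, Sum.inl _ => Sum.inr p.val
    | Sum.inr p, Sum.inr q => Sum.inl s(f p.val, f q.val), by
      rintro (a | p) (b | q)
      · exact congrArg Sum.inl (Sym2.eq_swap)
      · rfl
      · rfl
      · exact congrArg Sum.inl (Sym2.eq_swap)⟩

@[simp] lemma extPhi_inl_inl (a b : N) :
    extPhi f S s(Sum.inl a, Sum.inl b) = Sum.inl s(a, b) := by rw [extPhi, Sym2.lift_mk]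
@[simp] lemma extPhi_inl_inr (a : N) (p : {p : M // p ∈ S}) :
    extPhi f S s(Sum.inl a, Sum.inr p) = Sum.inr p.val := by rw [extPhi, Sym2.lift_mk]
@[simp] lemma extPhi_inr_inl (a : N) (p : {p : M // p ∈ S}) :
    extPhi f S s(Sum.inr p, Sum.inl a) = Sum.inr p.val := by rw [extPhi, Sym2.lift_mk]

end Ext

open Classical in
lemma frame_of_good_tree {M : Type} [Fintype M] (ρ : M → M → ℝ) (hρ : IsPseudoMetric ρ)
    (N : Type) [Fintype N] (d : N → N → ℝ) (f : M → N)
    (hd : IsPseudoMetric d) (hext : ∀ p q : M, d (f p) (f q) = ρ p q)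
    (H : SimpleGraph N) (hH : H.IsTree)
    (hgood : ∀ n : N, H.degree n = 1 ∨ H.degree n = 2 → n ∈ Set.range f) :
    ∃ (F : Frame M) (w' : Sym2 F.V → ℝ), F.IsFilling w' ρ ∧
      F.weight w' = (∑ u : N, ∑ v : N, if H.Adj u v then d u v else 0) / 2 := by
  haveI hNne : Nonempty N := hH.isConnected.nonempty
  set chosen : N → Option M := fun n => if h : ∃ p, f p = n then some h.choose else none
    with hchosen
  set S : Finset M := Finset.univ.filter (fun p => chosen (f p) ≠ some p) with hS
  set GG := extGraph f H S with hGG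
  letI : DecidableEq (N ⊕ {p : M // p ∈ S}) := Classical.decEq _
  letI : DecidableRel GG.Adj := Classical.decRel _
  haveI : Nonempty (N ⊕ {p : M // p ∈ S}) := ⟨Sum.inl (Classical.arbitrary N)⟩
  have hconn : GG.Connected := by
    refine SimpleGraph.Connected.mk ?_
    have hre : ∀ a b : N, GG.Reachable (Sum.inl a) (Sum.inl b) := by
      intro a b
      exact (hH.isConnected.preconnected a b).map ⟨Sum.inl, fun {a b} h => h⟩
    have hstep : ∀ p : {p : M // p ∈ S}, GG.Adj (Sum.inr p) (Sum.inl (f p.val)) := fun p => rfl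
    rintro (a | p) (b | q)
    · exact hre a b
    · exact (hre a (f q.val)).trans (SimpleGraph.Adj.reachable (hstep q)).symm
    · exact (SimpleGraph.Adj.reachable (hstep p)).trans (hre _ b)
    · exact ((SimpleGraph.Adj.reachable (hstep p)).trans (hre _ _)).trans
        (SimpleGraph.Adj.reachable (hstep q)).symm
  have hmaps : ∀ e ∈ GG.edgeFinset, extPhi f S e ∈ H.edgeFinset.disjSum S := by
    intro e he
    rw [SimpleGraph.mem_edgeFinset] at he
    induction e using Sym2.inductionOn with
    | _ x y =>
      rw [SimpleGraph.mem_edgeSet] at he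
      obtain (a | p) := x <;> obtain (b | q) := y
      · rw [extPhi_inl_inl, Finset.inl_mem_disjSum, SimpleGraph.mem_edgeFinset,
          SimpleGraph.mem_edgeSet]
        exact he
      · rw [extPhi_inl_inr, Finset.inr_mem_disjSum]; exact q.property
      · rw [extPhi_inr_inl, Finset.inr_mem_disjSum]; exact p.property
      · exact he.elim
  have hinj : Set.InjOn (extPhi f S) ↑GG.edgeFinset := by
    intro e1 h1 e2 h2 heq
    rw [Finset.mem_coe, SimpleGraph.mem_edgeFinset] at h1 h2
    induction e1 using Sym2.inductionOn with
    | _ x y =>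
    induction e2 using Sym2.inductionOn with
    | _ x' y' =>
    rw [SimpleGraph.mem_edgeSet] at h1 h2
    obtain (a | p) := x <;> obtain (b | q) := y <;> obtain (a' | p') := x' <;>
      obtain (b' | q') := y'
    all_goals try exact h1.elim
    all_goals try exact h2.elim
    · -- ll vs ll
      rw [extPhi_inl_inl, extPhi_inl_inl, Sum.inl.injEq] at heq
      rcases Sym2.eq_iff.mp heq with ⟨rfl, rfl⟩ | ⟨rfl, rfl⟩
      · rfl
      · exact Sym2.eq_swap
    · -- ll vs lr
      rw [extPhi_inl_inl, extPhi_inl_inr] at heq; exact (Sum.inl_ne_inr heq).elim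
    · -- ll vs rl
      rw [extPhi_inl_inl, extPhi_inr_inl] at heq; exact (Sum.inl_ne_inr heq).elim
    · -- lr vs ll
      rw [extPhi_inl_inr, extPhi_inl_inl] at heq; exact (Sum.inr_ne_inl heq).elim
    · -- lr vs lr
      rw [extPhi_inl_inr, extPhi_inl_inr, Sum.inr.injEq] at heq
      have hq : q = q' := Subtype.ext heq
      subst hq
      have h1' : f q.val = a := h1
      have h2' : f q.val = a' := h2
      have : a = a' := h1'.symm.trans h2'
      rw [this]
    · -- lr vs rl
      rw [extPhi_inl_inr, extPhi_inr_inl, Sum.inr.injEq] at heq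
      have hq : q = p' := Subtype.ext heq
      subst hq
      have h1' : f q.val = a := h1
      have h2' : f q.val = b' := h2
      have : a = b' := h1'.symm.trans h2'
      rw [this]
      exact Sym2.eq_swap
    · -- rl vs ll
      rw [extPhi_inr_inl, extPhi_inl_inl] at heq; exact (Sum.inr_ne_inl heq).elim
    · -- rl vs lr
      rw [extPhi_inr_inl, extPhi_inl_inr, Sum.inr.injEq] at heq
      have hq : p = q' := Subtype.ext heq
      subst hq
      have h1' : f p.val = b := h1
      have h2' : f p.val = a' := h2
      have : b = a' := h1'.symm.trans h2'
      rw [this]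
      exact Sym2.eq_swap
    · -- rl vs rl
      rw [extPhi_inr_inl, extPhi_inr_inl, Sum.inr.injEq] at heq
      have hq : p = p' := Subtype.ext heq
      subst hq
      have h1' : f p.val = b := h1
      have h2' : f p.val = b' := h2
      have : b = b' := h1'.symm.trans h2'
      rw [this]
  have hcard : GG.edgeFinset.card + 1 ≤ Fintype.card (N ⊕ {p : M // p ∈ S}) := by
    have h1 := Finset.card_le_card_of_injOn _ hmaps hinj
    rw [Finset.card_disjSum] at h1
    have hEH : H.edgeFinset.card + 1 = Fintype.card N := hH.card_edgeFinset
    have h2 : Fintype.card (N ⊕ {p : M // p ∈ S}) = Fintype.card N + S.card := by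
      rw [Fintype.card_sum, Fintype.card_coe]
    omega
  have htree : GG.IsTree := isTree_of_card GG hconn hcard
  set ι : M → N ⊕ {p : M // p ∈ S} :=
    fun p => if h : p ∈ S then Sum.inr ⟨p, h⟩ else Sum.inl (f p) with hι
  have hnotS : ∀ p : M, p ∉ S → chosen (f p) = some p := by
    intro p hp
    rw [hS, Finset.mem_filter] at hp
    push_neg at hp
    exact hp (Finset.mem_univ p)
  have hιinj : Function.Injective ι := by
    intro p q hpq
    simp only [hι] at hpq
    by_cases hp : p ∈ S <;> by_cases hq : q ∈ S
    · rw [dif_pos hp, dif_pos hq, Sum.inr.injEq] at hpq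
      exact congrArg Subtype.val hpq
    · rw [dif_pos hp, dif_neg hq] at hpq; exact (Sum.inr_ne_inl hpq).elim
    · rw [dif_neg hp, dif_pos hq] at hpq; exact (Sum.inl_ne_inr hpq).elim
    · rw [dif_neg hp, dif_neg hq, Sum.inl.injEq] at hpq
      have h1 := hnotS p hp
      have h2 := hnotS q hq
      rw [hpq, h2] at h1
      exact (Option.some_injective _ h1).symm
  have hjoins : ∀ v, GG.degree v = 1 ∨ GG.degree v = 2 → v ∈ Set.range ι := by
    rintro (n | p) hdeg
    · by_cases hr : ∃ p0 : M, f p0 = n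
      · refine ⟨hr.choose, ?_⟩
        have h1 : f hr.choose = n := hr.choose_spec
        have h2 : chosen (f hr.choose) = some hr.choose := by
          rw [h1, hchosen]
          exact dif_pos hr
        have h3 : hr.choose ∉ S := by
          rw [hS, Finset.mem_filter]
          push_neg
          intro _
          exact h2
        simp only [hι]
        rw [dif_neg h3, h1]
      · exfalso
        have hnb : GG.neighborFinset (Sum.inl n) = (H.neighborFinset n).image Sum.inl := by
          ext y
          rw [SimpleGraph.mem_neighborFinset]
          constructor
          · intro hy
            obtain (b | q) := y
            · refine Finset.mem_image_of_mem _ ?_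
              rw [SimpleGraph.mem_neighborFinset]
              exact hy
            · exact absurd ⟨q.val, hy⟩ hr
          · intro hy
            obtain ⟨b, hb, rfl⟩ := Finset.mem_image.mp hy
            rw [SimpleGraph.mem_neighborFinset] at hb
            exact hb
        have hdeq : GG.degree (Sum.inl n) = H.degree n := by
          show (GG.neighborFinset (Sum.inl n)).card = (H.neighborFinset n).card
          rw [hnb, Finset.card_image_of_injective _ Sum.inl_injective]
        rw [hdeq] at hdeg
        exact hr (hgood n hdeg)
    · refine ⟨p.val, ?_⟩
      simp only [hι]
      rw [dif_pos p.property]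
  set F : Frame M := ⟨(N ⊕ {p : M // p ∈ S}), GG, htree, ι, hιinj, hjoins⟩ with hF
  set w' : Sym2 (N ⊕ {p : M // p ∈ S}) → ℝ := extW S d hd.symm with hw'
  have hW0 : ∀ e : Sym2 (N ⊕ {p : M // p ∈ S}), 0 ≤ w' e := by
    intro e
    induction e using Sym2.inductionOn with
    | _ x y =>
      obtain (a | p) := x <;> obtain (b | q) := y
      · rw [hw', extW_inl_inl]; exact hd.nonneg a b
      · rw [hw', extW_inl_inr]
      · rw [hw', Sym2.eq_swap, extW_inl_inr]
      · rw [hw', extW, Sym2.lift_mk]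
  have hπadj : ∀ u v, GG.Adj u v →
      d (Sum.elim id (fun p : {p : M // p ∈ S} => f p.val) u)
        (Sum.elim id (fun p : {p : M // p ∈ S} => f p.val) v) ≤ w' s(u, v) := by
    rintro (a | p) (b | q) h
    · rw [hw', extW_inl_inl]
      exact le_rfl
    · have h' : f q.val = a := h
      rw [hw', extW_inl_inr]
      have : d (Sum.elim id (fun p : {p : M // p ∈ S} => f p.val) (Sum.inl a))
          (Sum.elim id (fun p : {p : M // p ∈ S} => f p.val) (Sum.inr q)) = 0 := by
        show d a (f q.val) = 0
        rw [h']
        exact hd.refl a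
      exact le_of_eq this
    · have h' : f p.val = b := h
      rw [hw', Sym2.eq_swap, extW_inl_inr]
      have : d (Sum.elim id (fun p : {p : M // p ∈ S} => f p.val) (Sum.inr p))
          (Sum.elim id (fun p : {p : M // p ∈ S} => f p.val) (Sum.inl b)) = 0 := by
        show d (f p.val) b = 0
        rw [h']
        exact hd.refl b
      exact le_of_eq this
    · exact h.elim
  have hFι : ∀ r : M, F.ι r = ι r := fun r => rfl
  have hπι : ∀ r : M, Sum.elim id (fun p : {p : M // p ∈ S} => f p.val) (ι r) = f r := by
    intro r
    simp only [hι]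
    by_cases h : r ∈ S
    · rw [dif_pos h]
      rfl
    · rw [dif_neg h]
      rfl
  have hfill : F.IsFilling w' ρ := by
    constructor
    · intro e _
      exact hW0 e
    · intro p q
      have hwalk := walk_weight_le (G := GG) w'
        (Sum.elim id (fun p : {p : M // p ∈ S} => f p.val)) hd hπadj
        (F.path (F.ι p) (F.ι q))
      rw [hFι p, hFι q, hπι p, hπι q] at hwalk
      have hdd : F.dist w' (F.ι p) (F.ι q)
          = ((F.path (F.ι p) (F.ι q)).edges.map w').sum := rfl
      rw [hdd]
      calc ρ p q = d (f p) (f q) := (hext p q).symm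
        _ ≤ _ := by
            have := hwalk
            rw [hFι p, hFι q]
            exact this
  have hsub : H.edgeFinset.image (Sym2.map Sum.inl) ⊆ GG.edgeFinset := by
    intro e he
    obtain ⟨e', he', rfl⟩ := Finset.mem_image.mp he
    revert he'
    induction e' using Sym2.inductionOn with
    | _ a b =>
      intro he'
      rw [SimpleGraph.mem_edgeFinset, SimpleGraph.mem_edgeSet] at he'
      rw [Sym2.map_pair_eq, SimpleGraph.mem_edgeFinset, SimpleGraph.mem_edgeSet]
      exact he'
  have hzero : ∀ e ∈ GG.edgeFinset, e ∉ H.edgeFinset.image (Sym2.map Sum.inl) → w' e = 0 := by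
    intro e he hne
    rw [SimpleGraph.mem_edgeFinset] at he
    revert he hne
    induction e using Sym2.inductionOn with
    | _ x y =>
      intro he hne
      rw [SimpleGraph.mem_edgeSet] at he
      obtain (a | p) := x <;> obtain (b | q) := y
      · exfalso
        apply hne
        refine Finset.mem_image.mpr ⟨s(a, b), ?_, Sym2.map_pair_eq _ _ _⟩
        rw [SimpleGraph.mem_edgeFinset, SimpleGraph.mem_edgeSet]
        exact he
      · rw [hw', extW_inl_inr]
      · rw [hw', Sym2.eq_swap, extW_inl_inr]
      · exact he.elim
  have hwe : F.weight w' = ∑ e ∈ H.edgeFinset, Sym2.lift ⟨d, hd.symm⟩ e := by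
    have h1 : F.weight w' = ∑ e ∈ GG.edgeFinset, w' e := rfl
    rw [h1, ← Finset.sum_subset hsub hzero,
      Finset.sum_image (fun x _ y _ h => Sym2.map.injective Sum.inl_injective h)]
    refine Finset.sum_congr rfl ?_
    intro e he
    induction e using Sym2.inductionOn with
    | _ a b => rw [Sym2.map_pair_eq, hw', extW_inl_inl, Sym2.lift_mk]
  refine ⟨F, w', hfill, ?_⟩
  rw [hwe]
  have hds := doubleSum_eq H (Sym2.lift ⟨d, hd.symm⟩)
  have heq : (∑ u : N, ∑ v : N, if H.Adj u v then d u v else 0)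
      = (∑ u : N, ∑ v : N, if H.Adj u v then (Sym2.lift ⟨d, hd.symm⟩) s(u, v) else 0) := by
    refine Finset.sum_congr rfl fun u _ => Finset.sum_congr rfl fun v _ => ?_
    exact if_congr Iff.rfl (Sym2.lift_mk ⟨d, hd.symm⟩ u v).symm rfl
  rw [heq, hds]
  ring

open Classical in
lemma surgery {N : Type} [Fintype N] (d : N → N → ℝ) (hd : IsPseudoMetric d)
    (H : SimpleGraph N) (hH : H.IsTree) (v : N)
    (hdeg : H.degree v = 1 ∨ H.degree v = 2) :
    ∃ (H' : SimpleGraph {x : N // x ≠ v}), H'.IsTree ∧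
      (∑ u : {x : N // x ≠ v}, ∑ u2 : {x : N // x ≠ v},
        if H'.Adj u u2 then d u.val u2.val else 0) / 2
      ≤ (∑ u : N, ∑ u2 : N, if H.Adj u u2 then d u u2 else 0) / 2 := by
  set H' : SimpleGraph {x : N // x ≠ v} :=
    { Adj := fun x y => H.Adj x.val y.val ∨ (x.val ≠ y.val ∧ H.Adj x.val v ∧ H.Adj v y.val)
      symm := ⟨by
        rintro x y (h | ⟨h1, h2, h3⟩)
        · exact Or.inl h.symm
        · exact Or.inr ⟨h1.symm, h3.symm, h2.symm⟩⟩
      loopless := ⟨by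
        rintro x (h | ⟨h1, _, _⟩)
        · exact H.loopless.irrefl _ h
        · exact h1 rfl⟩ } with hH'
  have hAdj1 : ∀ (x y : {x : N // x ≠ v}), H.Adj x.val y.val → H'.Adj x y :=
    fun x y h => Or.inl h
  have hAdj2 : ∀ (x y : {x : N // x ≠ v}), x.val ≠ y.val → H.Adj x.val v → H.Adj v y.val →
      H'.Adj x y := fun x y h1 h2 h3 => Or.inr ⟨h1, h2, h3⟩
  have hAdjElim : ∀ (x y : {x : N // x ≠ v}), H'.Adj x y →
      H.Adj x.val y.val ∨ (x.val ≠ y.val ∧ H.Adj x.val v ∧ H.Adj v y.val) := fun x y h => h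
  -- a neighbor of v
  have hnbne : (H.neighborFinset v).Nonempty := by
    rw [← Finset.card_pos]
    show 0 < H.degree v
    omega
  obtain ⟨a, ha⟩ := hnbne
  rw [SimpleGraph.mem_neighborFinset] at ha
  have hav : a ≠ v := fun h => H.loopless.irrefl v (h ▸ ha.symm)
  -- connectivity by walk surgery
  have hwalkind : ∀ n : ℕ, ∀ (x y : N) (hx : x ≠ v) (hy : y ≠ v) (p : H.Walk x y),
      p.length ≤ n → H'.Reachable ⟨x, hx⟩ ⟨y, hy⟩ := by
    intro n
    induction n with
    | zero =>
      intro x y hx hy p hp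
      cases p with
      | nil => exact SimpleGraph.Reachable.refl _
      | cons h q => simp at hp
    | succ n ih =>
      intro x y hx hy p hp
      cases p with
      | nil => exact SimpleGraph.Reachable.refl _
      | @cons _ z _ h q =>
        by_cases hz : z = v
        · cases q with
          | nil => exact absurd hz hy
          | @cons _ z2 _ h2 q2 =>
            rw [hz] at h h2
            have hz2 : z2 ≠ v := fun he => H.loopless.irrefl v (he ▸ h2)
            by_cases hxz2 : x = z2
            · subst hxz2
              refine ih x y hx hy q2 ?_
              simp only [SimpleGraph.Walk.length_cons] at hp
              omega
            · have hadj : H'.Adj ⟨x, hx⟩ ⟨z2, hz2⟩ := hAdj2 _ _ hxz2 h h2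
              refine hadj.reachable.trans (ih z2 y hz2 hy q2 ?_)
              simp only [SimpleGraph.Walk.length_cons] at hp
              omega
        · have hadj : H'.Adj ⟨x, hx⟩ ⟨z, hz⟩ := hAdj1 _ _ h
          refine hadj.reachable.trans (ih z y hz hy q ?_)
          simp only [SimpleGraph.Walk.length_cons] at hp
          omega
  haveI : Nonempty N := hH.isConnected.nonempty
  haveI : Nonempty {x : N // x ≠ v} := ⟨⟨a, hav⟩⟩
  have hconn : H'.Connected := by
    refine SimpleGraph.Connected.mk ?_
    rintro ⟨x, hx⟩ ⟨y, hy⟩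
    obtain ⟨p⟩ := hH.isConnected.preconnected x y
    exact hwalkind p.length x y hx hy p le_rfl
  -- the injection on edges
  have hjinj : Function.Injective (Sym2.map (Subtype.val : {x : N // x ≠ v} → N)) :=
    Sym2.map.injective Subtype.val_injective
  have hcardN' : Fintype.card {x : N // x ≠ v} + 1 = Fintype.card N := by
    rw [Fintype.card_subtype]
    have he : Finset.filter (fun x => x ≠ v) Finset.univ = Finset.univ.erase v := by
      ext x
      simp [Finset.mem_erase, and_comm]
    rw [he, Finset.card_erase_of_mem (Finset.mem_univ v), Finset.card_univ]
    have h3 : 0 < Fintype.card N := Fintype.card_pos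
    omega
  have hEH : H.edgeFinset.card + 1 = Fintype.card N := hH.card_edgeFinset
  have hg0 : ∀ e : Sym2 N, 0 ≤ Sym2.lift ⟨d, hd.symm⟩ e := by
    intro e
    induction e using Sym2.inductionOn with
    | _ x y => rw [Sym2.lift_mk]; exact hd.nonneg x y
  have hg'symm : ∀ x y : {x : N // x ≠ v}, d x.val y.val = d y.val x.val :=
    fun x y => hd.symm _ _
  set g : Sym2 N → ℝ := Sym2.lift ⟨d, hd.symm⟩ with hg
  set g' : Sym2 {x : N // x ≠ v} → ℝ :=
    Sym2.lift ⟨fun x y => d x.val y.val, hg'symm⟩ with hg'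
  have hgg' : ∀ e : Sym2 {x : N // x ≠ v}, g' e = g (Sym2.map Subtype.val e) := by
    intro e
    induction e using Sym2.inductionOn with
    | _ x y => rw [hg, hg', Sym2.lift_mk, Sym2.map_pair_eq, Sym2.lift_mk]
  have hfilters := Finset.card_filter_add_card_filter_not
    (s := H.edgeFinset) (p := fun e => v ∈ e)
  have hsum_split : ∑ e ∈ H.edgeFinset, g e
      = (∑ e ∈ H.edgeFinset.filter (fun e => v ∈ e), g e)
        + ∑ e ∈ H.edgeFinset.filter (fun e => ¬ v ∈ e), g e :=
    (Finset.sum_filter_add_sum_filter_not _ _ _).symm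
  -- sum over H' edges equals sum over image
  have hsum_img : ∀ (t : Finset (Sym2 N)), (∀ e ∈ H'.edgeFinset, Sym2.map Subtype.val e ∈ t) →
      ∑ e ∈ H'.edgeFinset, g' e ≤ ∑ e ∈ t, g e := by
    intro t hmaps
    have h1 : ∑ e ∈ H'.edgeFinset, g' e
        = ∑ e ∈ H'.edgeFinset.image (Sym2.map Subtype.val), g e := by
      rw [Finset.sum_image (fun x _ y _ h => hjinj h)]
      exact Finset.sum_congr rfl fun e _ => hgg' e
    rw [h1]
    refine Finset.sum_le_sum_of_subset_of_nonneg ?_ (fun e _ _ => hg0 e)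
    exact Finset.image_subset_iff.mpr hmaps
  have hfinal : ∑ e ∈ H'.edgeFinset, g' e ≤ ∑ e ∈ H.edgeFinset, g e
      ∧ H'.edgeFinset.card + 1 ≤ Fintype.card {x : N // x ≠ v} := by
    rcases hdeg with hdeg | hdeg
    · -- degree 1
      obtain ⟨c, hc⟩ := Finset.card_eq_one.mp hdeg
      have hcadj : H.Adj v c := by
        rw [← SimpleGraph.mem_neighborFinset, hc]
        exact Finset.mem_singleton_self c
      have hAdjIff : ∀ x y : {x : N // x ≠ v}, H'.Adj x y → H.Adj x.val y.val := by
        intro x y h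
        rcases hAdjElim x y h with h | ⟨h1, h2, h3⟩
        · exact h
        · exfalso
          have hx : x.val ∈ H.neighborFinset v := by
            rw [SimpleGraph.mem_neighborFinset]; exact h2.symm
          have hy : y.val ∈ H.neighborFinset v := by
            rw [SimpleGraph.mem_neighborFinset]; exact h3
          rw [hc, Finset.mem_singleton] at hx hy
          exact h1 (hx.trans hy.symm)
      have hmaps : ∀ e ∈ H'.edgeFinset, Sym2.map Subtype.val e ∈
          H.edgeFinset.filter (fun e => ¬ v ∈ e) := by
        intro e he
        rw [SimpleGraph.mem_edgeFinset] at he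
        revert he
        induction e using Sym2.inductionOn with
        | _ x y =>
          intro he
          rw [SimpleGraph.mem_edgeSet] at he
          rw [Sym2.map_pair_eq, Finset.mem_filter, SimpleGraph.mem_edgeFinset,
            SimpleGraph.mem_edgeSet]
          refine ⟨hAdjIff x y he, ?_⟩
          intro hv2
          rcases Sym2.mem_iff.mp hv2 with h | h
          · exact x.property h.symm
          · exact y.property h.symm
      have hinc : H.edgeFinset.filter (fun e => v ∈ e) = {s(v, c)} := by
        ext e
        rw [Finset.mem_filter, Finset.mem_singleton]
        constructor
        · rintro ⟨he, hv2⟩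
          revert he hv2
          induction e using Sym2.inductionOn with
          | _ x y =>
            intro he hv2
            rw [SimpleGraph.mem_edgeFinset, SimpleGraph.mem_edgeSet] at he
            rcases Sym2.mem_iff.mp hv2 with h | h
            · subst h
              have hyc : y ∈ H.neighborFinset v := by rwa [SimpleGraph.mem_neighborFinset]
              rw [hc, Finset.mem_singleton] at hyc
              rw [hyc]
            · subst h
              have hxc : x ∈ H.neighborFinset v := by
                rw [SimpleGraph.mem_neighborFinset]; exact he.symm
              rw [hc, Finset.mem_singleton] at hxc
              rw [hxc, Sym2.eq_swap]
        · rintro rfl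
          refine ⟨?_, by simp⟩
          rw [SimpleGraph.mem_edgeFinset, SimpleGraph.mem_edgeSet]
          exact hcadj
      constructor
      · refine (hsum_img _ hmaps).trans ?_
        rw [hsum_split]
        have h2 : 0 ≤ ∑ e ∈ H.edgeFinset.filter (fun e => v ∈ e), g e :=
          Finset.sum_nonneg fun e _ => hg0 e
        linarith
      · have h1 := Finset.card_le_card_of_injOn _ hmaps (hjinj.injOn)
        have h2 : (H.edgeFinset.filter (fun e => v ∈ e)).card = 1 := by rw [hinc]; simp
        omega
    · -- degree 2
      obtain ⟨b, c, hbc, hnb⟩ := Finset.card_eq_two.mp hdeg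
      have hbadj : H.Adj v b := by
        rw [← SimpleGraph.mem_neighborFinset, hnb]; simp
      have hcadj : H.Adj v c := by
        rw [← SimpleGraph.mem_neighborFinset, hnb]; simp
      have hbv : b ≠ v := fun h => H.loopless.irrefl v (h ▸ hbadj)
      have hcv : c ≠ v := fun h => H.loopless.irrefl v (h ▸ hcadj)
      have hnadj : ¬ H.Adj b c := by
        intro habc
        have hp2 : (SimpleGraph.Walk.cons hbadj.symm
            (SimpleGraph.Walk.cons hcadj SimpleGraph.Walk.nil) : H.Walk b c).IsPath := by
          rw [SimpleGraph.Walk.isPath_def]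
          simp only [SimpleGraph.Walk.support_cons, SimpleGraph.Walk.support_nil]
          simp [hbv, hbc, Ne.symm hcv]
        have := hH.2.path_unique (SimpleGraph.Path.singleton habc)
          ⟨_, hp2⟩
        have hlen := congrArg (fun p : H.Path b c => (p : H.Walk b c).length) this
        simp [SimpleGraph.Path.singleton] at hlen
      have hinc : H.edgeFinset.filter (fun e => v ∈ e) = {s(v, b), s(v, c)} := by
        ext e
        rw [Finset.mem_filter, Finset.mem_insert, Finset.mem_singleton]
        constructor
        · rintro ⟨he, hv2⟩
          revert he hv2
          induction e using Sym2.inductionOn with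
          | _ x y =>
            intro he hv2
            rw [SimpleGraph.mem_edgeFinset, SimpleGraph.mem_edgeSet] at he
            rcases Sym2.mem_iff.mp hv2 with h | h
            · subst h
              have hyc : y ∈ H.neighborFinset v := by rwa [SimpleGraph.mem_neighborFinset]
              rw [hnb, Finset.mem_insert, Finset.mem_singleton] at hyc
              rcases hyc with rfl | rfl
              · left; rfl
              · right; rfl
            · subst h
              have hxc : x ∈ H.neighborFinset v := by
                rw [SimpleGraph.mem_neighborFinset]; exact he.symm
              rw [hnb, Finset.mem_insert, Finset.mem_singleton] at hxc
              rcases hxc with rfl | rfl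
              · left; exact Sym2.eq_swap
              · right; exact Sym2.eq_swap
        · rintro (rfl | rfl)
          · refine ⟨?_, by simp⟩
            rw [SimpleGraph.mem_edgeFinset, SimpleGraph.mem_edgeSet]; exact hbadj
          · refine ⟨?_, by simp⟩
            rw [SimpleGraph.mem_edgeFinset, SimpleGraph.mem_edgeSet]; exact hcadj
      have hmaps : ∀ e ∈ H'.edgeFinset, Sym2.map Subtype.val e ∈
          insert s(b, c) (H.edgeFinset.filter (fun e => ¬ v ∈ e)) := by
        intro e he
        rw [SimpleGraph.mem_edgeFinset] at he
        revert he
        induction e using Sym2.inductionOn with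
        | _ x y =>
          intro he
          rw [SimpleGraph.mem_edgeSet] at he
          rw [Sym2.map_pair_eq, Finset.mem_insert]
          rcases hAdjElim x y he with h | ⟨h1, h2, h3⟩
          · right
            rw [Finset.mem_filter, SimpleGraph.mem_edgeFinset, SimpleGraph.mem_edgeSet]
            refine ⟨h, ?_⟩
            intro hv2
            rcases Sym2.mem_iff.mp hv2 with h' | h'
            · exact x.property h'.symm
            · exact y.property h'.symm
          · left
            have hx : x.val ∈ H.neighborFinset v := by
              rw [SimpleGraph.mem_neighborFinset]; exact h2.symm
            have hy : y.val ∈ H.neighborFinset v := by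
              rw [SimpleGraph.mem_neighborFinset]; exact h3
            rw [hnb, Finset.mem_insert, Finset.mem_singleton] at hx hy
            rcases hx with hx | hx <;> rcases hy with hy | hy
            · exact absurd (hx.trans hy.symm) h1
            · rw [hx, hy]
            · rw [hx, hy]; exact Sym2.eq_swap
            · exact absurd (hx.trans hy.symm) h1
      have hbcnot : s(b, c) ∉ H.edgeFinset.filter (fun e => ¬ v ∈ e) := by
        rw [Finset.mem_filter, SimpleGraph.mem_edgeFinset, SimpleGraph.mem_edgeSet]
        rintro ⟨h, _⟩
        exact hnadj h
      constructor
      · refine (hsum_img _ hmaps).trans ?_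
        rw [Finset.sum_insert hbcnot, hsum_split, hinc]
        have hvbvc : s(v, b) ≠ s(v, c) := by
          intro h
          rcases Sym2.eq_iff.mp h with ⟨_, h2⟩ | ⟨h1, h2⟩
          · exact hbc h2
          · exact hcv h1.symm
        rw [Finset.sum_pair hvbvc]
        have e1 : g s(b, c) = d b c := by rw [hg, Sym2.lift_mk]
        have e2 : g s(v, b) = d v b := by rw [hg, Sym2.lift_mk]
        have e3 : g s(v, c) = d v c := by rw [hg, Sym2.lift_mk]
        rw [e1, e2, e3]
        have ht : d b c ≤ d b v + d v c := hd.triangle b v c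
        have hs : d b v = d v b := hd.symm b v
        linarith
      · have h1 := Finset.card_le_card_of_injOn _ hmaps (hjinj.injOn)
        have h2 : (H.edgeFinset.filter (fun e => v ∈ e)).card = 2 := by
          rw [hinc]
          rw [Finset.card_insert_of_notMem (by
            rw [Finset.mem_singleton]
            intro h
            rcases Sym2.eq_iff.mp h with ⟨_, h2⟩ | ⟨h1, _⟩
            · exact hbc h2
            · exact hcv h1.symm), Finset.card_singleton]
        have h3 := Finset.card_insert_le s(b, c) (H.edgeFinset.filter (fun e => ¬ v ∈ e))
        omega
  refine ⟨H', isTree_of_card H' hconn hfinal.2, ?_⟩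
  have hds1 := doubleSum_eq H' g'
  have hds2 := doubleSum_eq H g
  refine le_trans (b := (2 * ∑ e ∈ H'.edgeFinset, g' e) / 2)
    (le_of_eq (congrArg (fun x : ℝ => x / 2) ?e1))
    (le_trans (b := (2 * ∑ e ∈ H.edgeFinset, g e) / 2) ?mid
      (le_of_eq (congrArg (fun x : ℝ => x / 2) ?e2)))
  case e1 =>
    refine (Finset.sum_congr rfl fun u _ => Finset.sum_congr rfl fun u2 _ => ?_).trans hds1
    rw [hg', Sym2.lift_mk]
    all_goals exact ite_inst _ _ _ _ _
  case e2 =>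
    refine hds2.symm.trans (Finset.sum_congr rfl fun u _ => Finset.sum_congr rfl fun u2 _ => ?_)
    rw [hg, Sym2.lift_mk]
    all_goals exact ite_inst _ _ _ _ _
  case mid =>
    have := hfinal.1
    linarith

open Classical in
lemma card_ne_lemma {N : Type} [Fintype N] [Nonempty N] (v : N) :
    Fintype.card {x : N // x ≠ v} + 1 = Fintype.card N := by
  rw [Fintype.card_subtype]
  have he : Finset.filter (fun x => x ≠ v) Finset.univ = Finset.univ.erase v := by
    ext x
    simp [Finset.mem_erase, and_comm]
  rw [he, Finset.card_erase_of_mem (Finset.mem_univ v), Finset.card_univ]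
  have h3 : 0 < Fintype.card N := Fintype.card_pos
  omega

open Classical in
lemma main_A {M : Type} [Fintype M] (ρ : M → M → ℝ) (hρ : IsPseudoMetric ρ) :
    ∀ (n : ℕ) (N : Type) (iN : Fintype N) (d : N → N → ℝ) (f : M → N) (H : SimpleGraph N),
      Fintype.card N = n → IsPseudoMetric d → (∀ p q : M, d (f p) (f q) = ρ p q) → H.IsTree →
      mf ρ ≤ (∑ u : N, ∑ v : N, if H.Adj u v then d u v else 0) / 2 := by
  intro n
  induction n using Nat.strong_induction_on with
  | _ n ih =>
    intro N iN d f H hcard hd hext hH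
    by_cases hbad : ∃ v : N, (H.degree v = 1 ∨ H.degree v = 2) ∧ v ∉ Set.range f
    · obtain ⟨v, hdeg, hv⟩ := hbad
      obtain ⟨H', hH', hle⟩ := surgery d hd H hH v hdeg
      refine le_trans ?_ hle
      haveI : Nonempty N := hH.isConnected.nonempty
      have hlt : Fintype.card {x : N // x ≠ v} < n := by
        have := card_ne_lemma v
        omega
      have hd' : IsPseudoMetric (fun (x y : {x : N // x ≠ v}) => d x.val y.val) :=
        ⟨fun x y => hd.nonneg _ _, fun x => hd.refl _, fun x y => hd.symm _ _,
          fun x y z => hd.triangle _ _ _⟩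
      exact ih _ hlt _ inferInstance _ (fun p => ⟨f p, fun h => hv ⟨p, h⟩⟩) H' rfl hd'
        (fun p q => hext p q) hH'
    · push_neg at hbad
      obtain ⟨F, w', hfill, hw⟩ := frame_of_good_tree ρ hρ N d f hd hext H hH hbad
      rw [← hw]
      apply csInf_le
      · refine ⟨0, ?_⟩
        rintro x ⟨F1, w1, hf1, rfl⟩
        show (0 : ℝ) ≤ ∑ e ∈ F1.G.edgeFinset, w1 e
        exact Finset.sum_nonneg fun e he => hf1.1 e he
      · exact ⟨F, w', hfill, rfl⟩

lemma pseudo0 : IsPseudoMetric (fun (_ _ : PUnit) => (0 : ℝ)) :=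
  ⟨fun _ _ => le_refl 0, fun _ => rfl, fun _ _ => rfl, fun _ _ _ => by norm_num⟩

lemma bot_tree_punit : (⊥ : SimpleGraph PUnit).IsTree := by
  constructor
  · refine SimpleGraph.Connected.mk fun u v => ?_
    cases u; cases v
    exact SimpleGraph.Reachable.refl _
  · intro v c hc
    cases c with
    | nil => exact hc.ne_nil rfl
    | cons h q => exact h.elim

theorem stmt1 {M : Type} [Fintype M] (ρ : M → M → ℝ) (hρ : IsPseudoMetric ρ) :
    mf ρ = sInf { x | ∃ (N : Type) (iN : Fintype N) (d : N → N → ℝ) (f : M → N),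
      IsPseudoMetric d ∧ (∀ p q : M, d (f p) (f q) = ρ p q) ∧ x = @mstW N iN d } := by
  apply le_antisymm
  · refine le_csInf ⟨mstW ρ, M, inferInstance, ρ, id, hρ, fun p q => rfl, rfl⟩ ?_
    rintro b ⟨N, iN, d, f, hd, hext, rfl⟩
    by_cases hN : Nonempty N
    · haveI := hN
      letI : DecidableEq N := Classical.decEq N
      obtain ⟨H0, hH0⟩ := exists_tree N
      rw [mstW]
      refine le_csInf ⟨_, H0, hH0, rfl⟩ ?_
      rintro x ⟨H, hH, rfl⟩
      exact main_A ρ hρ (Fintype.card N) N iN d f H rfl hd hext hH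
    · have hM : IsEmpty M := ⟨fun p => hN ⟨f p⟩⟩
      have h0 := main_A ρ hρ 1 PUnit inferInstance (fun _ _ => 0) (fun _ => PUnit.unit) ⊥
        (by simp) pseudo0 (fun p q => hM.elim p) bot_tree_punit
      have h1 : (0 : ℝ) ≤ mstW d := mstW_nonneg d hd.nonneg
      refine le_trans ?_ h1
      simpa using h0
  · refine le_csInf ?_ ?_
    · by_cases hM : Nonempty M
      · haveI := hM
        letI : DecidableEq M := Classical.decEq M
        obtain ⟨H0, hH0⟩ := exists_tree M
        obtain ⟨F, w', hfill, hw⟩ := frame_of_good_tree ρ hρ M ρ id hρ (fun p q => rfl)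
          H0 hH0 (fun n _ => ⟨n, rfl⟩)
        exact ⟨_, F, w', hfill, rfl⟩
      · have hM' : IsEmpty M := not_nonempty_iff.mp hM
        obtain ⟨F, w', hfill, hw⟩ := frame_of_good_tree ρ hρ PUnit (fun _ _ => 0)
          (fun _ => PUnit.unit) pseudo0 (fun p q => hM'.elim p) ⊥ bot_tree_punit
          (fun n hn => by
            rcases hn with hn | hn
            · obtain ⟨x, hx⟩ := Finset.card_pos.mp (lt_of_lt_of_eq Nat.one_pos hn.symm)
              rw [SimpleGraph.mem_neighborFinset] at hx
              exact hx.elim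
            · obtain ⟨x, hx⟩ := Finset.card_pos.mp (lt_of_lt_of_eq (by norm_num) hn.symm)
              rw [SimpleGraph.mem_neighborFinset] at hx
              exact hx.elim)
        exact ⟨_, F, w', hfill, rfl⟩
    · rintro a ⟨F, w', hfill, rfl⟩
      obtain ⟨N, iN, d, f, hd, hext, hmst⟩ := extension_of_filling ρ hρ F w' hfill
      refine le_trans (csInf_le ?_ ?_) hmst
      · refine ⟨0, ?_⟩
        rintro b ⟨N1, iN1, d1, f1, hd1, hext1, rfl⟩
        exact mstW_nonneg d1 hd1.nonneg
      · exact ⟨N, iN, d, f, hd, hext, rfl⟩
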